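/- If Y has survival function P(Y > x) = x^{-β} L(x) with L slowly varying and β > 0, and T > 0 is independent of Y with E[T^ε] < ∞ for some ε > β, then the product X = YT also has a Pareto-type (regularly varying) upper tail with the same index β; i.e., P(X > x) = x^{-β} ℓ(x) for some slowly varying ℓ, namely ℓ(x) = L(x) E[T^β] (1 + o(1)). -/

import Mathlib

open MeasureTheory ProbabilityTheory Filter Real

/-- `L` is slowly varying at infinity: `L(ax)/L(x) → 1` as `x → ∞` for every `a > 0`. -/
def SlowlyVarying (L : ℝ → ℝ) : Prop :=
  ∀ a > 0, Filter.Tendsto (fun x => L (a * x) / L x) Filter.atTop (nhds 1)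

lemma aux_exists_pow (r : ℝ) (hr : 1 ≤ r) : ∃ n : ℕ, r ≤ 2^n ∧ (2:ℝ)^n ≤ 2*r := by
  refine ⟨⌈Real.logb 2 r⌉₊, ?_, ?_⟩
  · have h1 : Real.logb 2 r ≤ (⌈Real.logb 2 r⌉₊ : ℝ) := Nat.le_ceil _
    calc r = (2:ℝ) ^ (Real.logb 2 r) := (Real.rpow_logb (by norm_num) (by norm_num) (by linarith)).symm
    _ ≤ (2:ℝ) ^ ((⌈Real.logb 2 r⌉₊ : ℝ)) := Real.rpow_le_rpow_of_exponent_le (by norm_num) h1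
    _ = (2:ℝ) ^ (⌈Real.logb 2 r⌉₊ : ℕ) := by rw [Real.rpow_natCast]
  · have h0 : 0 ≤ Real.logb 2 r := Real.logb_nonneg (by norm_num) hr
    have h2 : (⌈Real.logb 2 r⌉₊ : ℝ) < Real.logb 2 r + 1 := Nat.ceil_lt_add_one h0
    calc (2:ℝ) ^ (⌈Real.logb 2 r⌉₊ : ℕ) = (2:ℝ) ^ ((⌈Real.logb 2 r⌉₊ : ℝ)) := by
          rw [Real.rpow_natCast]
    _ ≤ (2:ℝ) ^ (Real.logb 2 r + 1) := Real.rpow_le_rpow_of_exponent_le (by norm_num) h2.le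
    _ = 2 * r := by
          rw [Real.rpow_add (by norm_num), Real.rpow_logb (by norm_num) (by norm_num) (by linarith),
            Real.rpow_one]; ring

theorem stmt1
    {Ω : Type*} [MeasurableSpace Ω] (μ : Measure Ω) [IsProbabilityMeasure μ]
    (Y T : Ω → ℝ) (hYm : Measurable Y) (hTm : Measurable T)
    (hYnn : ∀ᵐ ω ∂μ, 0 ≤ Y ω) (hTpos : ∀ᵐ ω ∂μ, 0 < T ω)
    (hindep : IndepFun Y T μ)
    (β : ℝ) (hβ : 0 < β)
    (L : ℝ → ℝ) (hL : SlowlyVarying L)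
    (htail : ∀ᶠ x in atTop, (μ {ω | Y ω > x}).toReal = x ^ (-β) * L x)
    (hmom : ∃ ε > β, Integrable (fun ω => T ω ^ ε) μ) :
    ∃ ℓ : ℝ → ℝ, SlowlyVarying ℓ ∧
      (∀ᶠ x in atTop, (μ {ω | Y ω * T ω > x}).toReal = x ^ (-β) * ℓ x) ∧
      Tendsto (fun x => ℓ x / (L x * ∫ ω, T ω ^ β ∂μ)) atTop (nhds 1) := by
  obtain ⟨ε, hεβ, hTint⟩ := hmom
  set γ : ℝ := (β + ε) / 2 with hγdef
  have hγpos : 0 < γ := by simp only [hγdef]; linarith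
  have hβγ : β < γ := by simp only [hγdef]; linarith
  have hγε : γ < ε := by simp only [hγdef]; linarith
  set U : ℝ → ℝ := fun x => (μ {ω | Y ω > x}).toReal with hUdef
  set V : ℝ → ℝ := fun x => (μ {ω | Y ω * T ω > x}).toReal with hVdef
  -- basic facts about U
  have hUnn : ∀ x, 0 ≤ U x := fun x => ENNReal.toReal_nonneg
  have hU1 : ∀ x, U x ≤ 1 := by
    intro x
    have := prob_le_one (μ := μ) (s := {ω | Y ω > x})
    exact ENNReal.toReal_le_of_le_ofReal one_pos.le (by simpa using this)
  have hUanti : Antitone U := by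
    intro a b hab
    apply ENNReal.toReal_mono (measure_ne_top μ _)
    exact measure_mono (fun ω h => lt_of_le_of_lt hab h)
  have hUmeas : Measurable U := by
    apply Measurable.ennreal_toReal
    apply Antitone.measurable
    intro a b hab
    exact measure_mono (fun ω h => lt_of_le_of_lt hab h)
  -- eventual positivity of L
  have hLpos : ∀ᶠ x in atTop, 0 < L x := by
    have h1 := hL 1 one_pos
    have hne : ∀ᶠ x in atTop, L x ≠ 0 := by
      have h2 : ∀ᶠ x in atTop, L (1 * x) / L x ≠ 0 :=
        h1.eventually_ne (by norm_num : (1:ℝ) ≠ 0)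
      filter_upwards [h2] with x hx
      intro h0
      apply hx
      rw [one_mul, h0, div_zero]
    filter_upwards [hne, htail, eventually_gt_atTop 0] with x hx hx2 hx3
    have hxnn : 0 ≤ x ^ (-β) * L x := hx2 ▸ ENNReal.toReal_nonneg
    have hp : (0:ℝ) < x ^ (-β) := Real.rpow_pos_of_pos hx3 _
    have : 0 ≤ L x := nonneg_of_mul_nonneg_right hxnn hp
    exact lt_of_le_of_ne this (Ne.symm hx)
  -- doubling inequality and threshold x₁
  obtain ⟨x₁, hx₁1, hx₁⟩ :
      ∃ x₁ : ℝ, 1 ≤ x₁ ∧ ∀ x, x₁ ≤ x →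
        (U x = x ^ (-β) * L x ∧ 0 < L x ∧ U x ≤ 2 ^ γ * U (2 * x)) := by
    have h2 : Tendsto (fun x : ℝ => 2 * x) atTop atTop :=
      (tendsto_id.const_mul_atTop two_pos)
    have h2x : ∀ᶠ x in atTop, U (2*x) = (2*x) ^ (-β) * L (2*x) ∧ 0 < L (2*x) :=
      h2.eventually (htail.and hLpos)
    have hlt1 : (2:ℝ) ^ (β - γ) < 1 :=
      Real.rpow_lt_one_of_one_lt_of_neg (by norm_num) (by linarith)
    have hratio : ∀ᶠ x in atTop, (2:ℝ) ^ (β - γ) < L (2 * x) / L x :=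
      (hL 2 two_pos).eventually (eventually_gt_nhds hlt1)
    have hall : ∀ᶠ x in atTop,
        (U x = x ^ (-β) * L x ∧ 0 < L x ∧ U x ≤ 2 ^ γ * U (2 * x)) := by
      filter_upwards [htail, hLpos, h2x, hratio, eventually_ge_atTop 1]
        with x h1 h2' h3 h4 h5
      refine ⟨h1, h2', ?_⟩
      have hx0 : (0:ℝ) < x := lt_of_lt_of_le one_pos h5
      have hLlb : (2:ℝ) ^ (β - γ) * L x < L (2*x) := by
        rw [← lt_div_iff₀ h2']; exact h4
      have h2xβ : ((2:ℝ)*x) ^ (-β) = 2 ^ (-β) * x ^ (-β) :=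
        Real.mul_rpow (by norm_num) hx0.le
      have h1' : U x = x ^ (-β) * L x := h1
      rw [h1', h3.1, h2xβ]
      have hkey : (2:ℝ) ^ γ * (2 ^ (-β) * x ^ (-β)) * ((2:ℝ) ^ (β - γ) * L x)
          ≤ 2 ^ γ * (2 ^ (-β) * x ^ (-β)) * L (2*x) := by
        apply mul_le_mul_of_nonneg_left hLlb.le
        positivity
      calc x ^ (-β) * L x
          = (2:ℝ) ^ γ * (2 ^ (-β) * x ^ (-β)) * ((2:ℝ) ^ (β - γ) * L x) := by
            rw [show (2:ℝ) ^ γ * (2 ^ (-β) * x ^ (-β)) * ((2:ℝ) ^ (β - γ) * L x)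
                = ((2:ℝ) ^ γ * 2 ^ (-β) * 2 ^ (β - γ)) * (x ^ (-β) * L x) by ring,
              ← Real.rpow_add two_pos, ← Real.rpow_add two_pos,
              show γ + -β + (β - γ) = 0 by ring, Real.rpow_zero, one_mul]
        _ ≤ (2:ℝ) ^ γ * (2 ^ (-β) * x ^ (-β)) * L (2*x) := hkey
        _ = 2 ^ γ * ((2:ℝ) ^ (-β) * x ^ (-β) * L (2*x)) := by ring
    obtain ⟨a, ha⟩ := hall.exists_forall_of_atTop
    exact ⟨max a 1, le_max_right _ _, fun x hx => ha x (le_trans (le_max_left _ _) hx)⟩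
  have hUpos : ∀ x, x₁ ≤ x → 0 < U x := by
    intro x hx
    obtain ⟨h1, h2, -⟩ := hx₁ x hx
    have hx0 : (0:ℝ) < x := lt_of_lt_of_le one_pos (le_trans hx₁1 hx)
    rw [h1]; positivity
  -- iterated doubling
  have hiter : ∀ n : ℕ, ∀ x, x₁ ≤ x → U x ≤ 2 ^ (γ * n) * U (2 ^ n * x) := by
    intro n
    induction n with
    | zero => intro x hx; simp
    | succ n ih =>
      intro x hx
      have hx0 : (0:ℝ) < x := lt_of_lt_of_le one_pos (le_trans hx₁1 hx)
      have hx2 : x₁ ≤ 2 ^ n * x :=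
        le_trans hx (le_mul_of_one_le_left hx0.le (one_le_pow₀ (by norm_num)))
      have h1 := ih x hx
      have h2 := (hx₁ _ hx2).2.2
      calc U x ≤ 2 ^ (γ * n) * U (2 ^ n * x) := h1
        _ ≤ 2 ^ (γ * n) * (2 ^ γ * U (2 * (2 ^ n * x))) :=
            mul_le_mul_of_nonneg_left h2 (Real.rpow_nonneg (by norm_num) _)
        _ = 2 ^ (γ * (n+1) : ℝ) * U (2 ^ (n+1) * x) := by
            rw [show γ * ((n:ℝ)+1) = γ * n + γ by ring, Real.rpow_add two_pos,
              show (2:ℝ) * (2 ^ n * x) = 2 ^ (n+1) * x by ring]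
            ring
        _ = 2 ^ (γ * ((n+1 : ℕ) : ℝ)) * U (2 ^ (n+1) * x) := by push_cast; ring_nf
  -- Potter-type bound
  have hB : ∀ x y, x₁ ≤ y → y ≤ x → U y ≤ 2 ^ γ * (x / y) ^ γ * U x := by
    intro x y hy hxy
    have hy0 : (0:ℝ) < y := lt_of_lt_of_le one_pos (le_trans hx₁1 hy)
    have hx0 : (0:ℝ) < x := lt_of_lt_of_le hy0 hxy
    have hr1 : (1:ℝ) ≤ x / y := (one_le_div hy0).2 hxy
    obtain ⟨n, hn1, hn2⟩ := aux_exists_pow _ hr1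
    have h1 : U y ≤ 2 ^ (γ * n) * U (2 ^ n * y) := hiter n y hy
    have h2 : U (2 ^ n * y) ≤ U x := hUanti ((div_le_iff₀ hy0).1 hn1)
    have h3 : (2:ℝ) ^ (γ * n) ≤ 2 ^ γ * (x / y) ^ γ := by
      have e1 : (2:ℝ) ^ (γ * n) = ((2:ℝ) ^ n) ^ γ := by
        rw [mul_comm, Real.rpow_mul (by norm_num), Real.rpow_natCast]
      rw [e1]
      calc ((2:ℝ) ^ n) ^ γ ≤ (2 * (x / y)) ^ γ :=
            Real.rpow_le_rpow (by positivity) hn2 hγpos.le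
        _ = 2 ^ γ * (x / y) ^ γ := Real.mul_rpow (by norm_num) (by positivity)
    calc U y ≤ 2 ^ (γ * n) * U (2 ^ n * y) := h1
      _ ≤ 2 ^ (γ * n) * U x := mul_le_mul_of_nonneg_left h2 (Real.rpow_nonneg (by norm_num) _)
      _ ≤ 2 ^ γ * (x / y) ^ γ * U x := mul_le_mul_of_nonneg_right h3 (hUnn x)
  -- global domination bound
  set C : ℝ := 2 ^ γ * (1 + (U x₁)⁻¹) with hCdef
  have hC1 : 1 ≤ C := by
    have h1 : (1:ℝ) ≤ 2 ^ γ := by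
      calc (1:ℝ) = 2 ^ (0:ℝ) := (Real.rpow_zero 2).symm
      _ ≤ 2 ^ γ := Real.rpow_le_rpow_of_exponent_le (by norm_num) hγpos.le
    have h2 : (0:ℝ) ≤ (U x₁)⁻¹ := inv_nonneg.2 (hUpos x₁ le_rfl).le
    calc (1:ℝ) = 1 * 1 := by ring
    _ ≤ 2 ^ γ * (1 + (U x₁)⁻¹) := by apply mul_le_mul h1 (by linarith) one_pos.le; positivity
  have hbound : ∀ x, x₁ ≤ x → ∀ t : ℝ, 0 < t → U (x / t) ≤ C * (1 + t ^ ε) * U x := by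
    intro x hx t ht
    have hx0 : (0:ℝ) < x := lt_of_lt_of_le one_pos (le_trans hx₁1 hx)
    have htε : (0:ℝ) ≤ t ^ ε := Real.rpow_nonneg ht.le _
    have hfac : (1:ℝ) ≤ C * (1 + t ^ ε) := by nlinarith
    rcases le_or_gt t 1 with ht1 | ht1
    · have hxt : x ≤ x / t := le_div_self hx0.le ht ht1
      calc U (x / t) ≤ U x := hUanti hxt
        _ = 1 * U x := (one_mul _).symm
        _ ≤ C * (1 + t ^ ε) * U x := mul_le_mul_of_nonneg_right hfac (hUnn x)
    · have htγε : t ^ γ ≤ t ^ ε := Real.rpow_le_rpow_of_exponent_le ht1.le hγε.le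
      have h2γC : (2:ℝ) ^ γ ≤ C := by
        rw [hCdef]
        nlinarith [Real.rpow_nonneg (show (0:ℝ) ≤ 2 by norm_num) γ,
          inv_nonneg.2 (hUpos x₁ le_rfl).le]
      rcases le_or_gt x₁ (x / t) with hxt | hxt
      · have hxtx : x / t ≤ x := div_le_self hx0.le ht1.le
        have := hB x (x / t) hxt hxtx
        have he : x / (x / t) = t := by field_simp
        rw [he] at this
        calc U (x / t) ≤ 2 ^ γ * t ^ γ * U x := this
          _ ≤ C * (1 + t ^ ε) * U x := by
              apply mul_le_mul_of_nonneg_right _ (hUnn x)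
              have : (0:ℝ) ≤ t ^ γ := Real.rpow_nonneg ht.le _
              nlinarith
      · -- x/t < x₁ : use U ≤ 1 and lower bound on U x
        have hUx1 : U x₁ ≤ 2 ^ γ * (x / x₁) ^ γ * U x := hB x x₁ le_rfl hx
        have hx₁0 : (0:ℝ) < x₁ := lt_of_lt_of_le one_pos hx₁1
        have htx : x / x₁ < t := by
          rw [div_lt_iff₀ hx₁0]
          rw [div_lt_iff₀ ht] at hxt
          linarith [mul_comm x₁ t]
        have hxx1 : (1:ℝ) ≤ x / x₁ := (one_le_div hx₁0).2 hx
        have htγ2 : (x / x₁) ^ γ ≤ t ^ γ :=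
          Real.rpow_le_rpow (by positivity) htx.le hγpos.le
        have hkey : 2 ^ (-γ:ℝ) * U x₁ ≤ t ^ γ * U x := by
          have h2γpos : (0:ℝ) < 2 ^ γ := Real.rpow_pos_of_pos two_pos _
          have : U x₁ / 2 ^ γ ≤ (x / x₁) ^ γ * U x := by
            rw [div_le_iff₀ h2γpos]
            calc U x₁ ≤ 2 ^ γ * (x / x₁) ^ γ * U x := hUx1
              _ = (x / x₁) ^ γ * U x * 2 ^ γ := by ring
          calc 2 ^ (-γ:ℝ) * U x₁ = U x₁ / 2 ^ γ := by
                rw [Real.rpow_neg (by norm_num)]; ring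
            _ ≤ (x / x₁) ^ γ * U x := this
            _ ≤ t ^ γ * U x := mul_le_mul_of_nonneg_right htγ2 (hUnn x)
        have hone : (1:ℝ) ≤ C * (t ^ γ * U x) := by
          have hc2 : C * (2 ^ (-γ:ℝ) * U x₁) = (1 + (U x₁)⁻¹) * U x₁ := by
            rw [hCdef, Real.rpow_neg (by norm_num)]
            have h2γpos : (0:ℝ) < 2 ^ γ := Real.rpow_pos_of_pos two_pos _
            field_simp
          have hUx₁pos := hUpos x₁ le_rfl
          have : (1:ℝ) ≤ C * (2 ^ (-γ:ℝ) * U x₁) := by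
            rw [hc2, add_mul, inv_mul_cancel₀ (ne_of_gt hUx₁pos)]
            nlinarith
          calc (1:ℝ) ≤ C * (2 ^ (-γ:ℝ) * U x₁) := this
            _ ≤ C * (t ^ γ * U x) :=
                mul_le_mul_of_nonneg_left hkey (by linarith)
        calc U (x / t) ≤ 1 := hU1 _
          _ ≤ C * (t ^ γ * U x) := hone
          _ ≤ C * ((1 + t ^ ε) * U x) := by
              apply mul_le_mul_of_nonneg_left _ (by linarith : (0:ℝ) ≤ C)
              exact mul_le_mul_of_nonneg_right (by linarith) (hUnn x)
          _ = C * (1 + t ^ ε) * U x := by ring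
  -- representation via independence
  have hrep : ∀ x : ℝ, V x = ∫ ω, U (x / T ω) ∂μ := by
    intro x
    have hprobY : IsProbabilityMeasure (μ.map Y) := Measure.isProbabilityMeasure_map hYm.aemeasurable
    have hprobT : IsProbabilityMeasure (μ.map T) := Measure.isProbabilityMeasure_map hTm.aemeasurable
    have hmapeq : μ.map (fun ω => (Y ω, T ω)) = (μ.map Y).prod (μ.map T) :=
      (indepFun_iff_map_prod_eq_prod_map_map hYm.aemeasurable hTm.aemeasurable).mp hindep
    have hs : MeasurableSet {p : ℝ × ℝ | p.1 * p.2 > x} :=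
      measurableSet_lt measurable_const (measurable_fst.mul measurable_snd)
    have hFm : Measurable (fun t => (μ.map Y) {y | y * t > x}) :=
      measurable_measure_prodMk_right (μ := μ.map Y) hs
    have e1 : μ {ω | Y ω * T ω > x} = ∫⁻ ω, (μ.map Y) {y | y * T ω > x} ∂μ := by
      have h1 : μ {ω | Y ω * T ω > x}
          = μ.map (fun ω => (Y ω, T ω)) {p : ℝ × ℝ | p.1 * p.2 > x} := by
        rw [Measure.map_apply (hYm.prodMk hTm) hs]
        rfl
      rw [h1, hmapeq, Measure.prod_apply_symm hs]
      exact lintegral_map hFm hTm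
    have hfin : ∀ᵐ ω ∂μ, (μ.map Y) {y | y * T ω > x} < ⊤ :=
      Filter.Eventually.of_forall (fun ω => measure_lt_top _ _)
    have e2 : ∫ ω, ((μ.map Y) {y | y * T ω > x}).toReal ∂μ
        = (∫⁻ ω, (μ.map Y) {y | y * T ω > x} ∂μ).toReal :=
      integral_toReal (hFm.comp hTm).aemeasurable hfin
    have e3 : V x = ∫ ω, ((μ.map Y) {y | y * T ω > x}).toReal ∂μ := by
      show (μ {ω | Y ω * T ω > x}).toReal = _
      rw [e1]
      exact e2.symm
    rw [e3]
    apply integral_congr_ae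
    filter_upwards [hTpos] with ω hω
    have hset : {y : ℝ | y * T ω > x} = Set.Ioi (x / T ω) := by
      ext y
      simp only [Set.mem_setOf_eq, Set.mem_Ioi, gt_iff_lt]
      rw [div_lt_iff₀ hω]
    rw [hset, Measure.map_apply hYm measurableSet_Ioi]
    rfl
  -- integrability facts
  have hTβint : Integrable (fun ω => T ω ^ β) μ := by
    have h1 : Integrable (fun ω => 1 + T ω ^ ε) μ := (integrable_const 1).add hTint
    apply h1.mono (((Real.continuous_rpow_const hβ.le).measurable.comp hTm).aestronglyMeasurable)
    filter_upwards [hTpos] with ω hω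
    have h2 : (0:ℝ) ≤ T ω ^ β := Real.rpow_nonneg hω.le _
    have h3 : (0:ℝ) ≤ T ω ^ ε := Real.rpow_nonneg hω.le _
    show |((fun x => x ^ β) ∘ T) ω| ≤ |1 + T ω ^ ε|
    rw [show ((fun x => x ^ β) ∘ T) ω = T ω ^ β from rfl, abs_of_nonneg h2,
      abs_of_nonneg (by linarith : (0:ℝ) ≤ 1 + T ω ^ ε)]
    rcases le_or_gt (T ω) 1 with h | h
    · have := Real.rpow_le_one hω.le h hβ.le
      linarith
    · have := Real.rpow_le_rpow_of_exponent_le h.le hεβ.le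
      linarith
  set c : ℝ := ∫ ω, T ω ^ β ∂μ with hcdef
  have hcpos : 0 < c := by
    have hpos : ∀ᵐ ω ∂μ, 0 < T ω ^ β := hTpos.mono fun ω h => Real.rpow_pos_of_pos h β
    rw [hcdef]
    rw [integral_pos_iff_support_of_nonneg_ae (hpos.mono fun ω h => h.le) hTβint]
    by_contra h
    push_neg at h
    have h0 : μ (Function.support fun ω => T ω ^ β) = 0 := le_antisymm h zero_le
    have h1 : ∀ᵐ ω ∂μ, (fun ω => T ω ^ β) ω = 0 := by
      have := measure_eq_zero_iff_ae_notMem.mp h0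
      filter_upwards [this] with ω hω
      simpa [Function.mem_support] using hω
    haveI : (ae μ).NeBot := ae_neBot.mpr (IsProbabilityMeasure.ne_zero μ)
    obtain ⟨ω, hω1, hω2⟩ := (hpos.and h1).exists
    simp only at hω2
    linarith
  -- dominated convergence
  have hDCT : Tendsto (fun x => ∫ ω, U (x / T ω) / U x ∂μ) atTop (nhds c) := by
    refine tendsto_integral_filter_of_dominated_convergence
      (fun ω => C * (1 + T ω ^ ε)) ?_ ?_ ?_ ?_
    · exact Filter.Eventually.of_forall fun x =>
        ((hUmeas.comp (measurable_const.div hTm)).div_const _).aestronglyMeasurable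
    · filter_upwards [eventually_ge_atTop x₁] with x hx
      filter_upwards [hTpos] with ω hω
      rw [Real.norm_eq_abs, abs_of_nonneg (div_nonneg (hUnn _) (hUnn _))]
      rw [div_le_iff₀ (hUpos x hx)]
      exact hbound x hx (T ω) hω
    · exact ((integrable_const 1).add hTint).const_mul C
    · filter_upwards [hTpos] with ω hω
      set t := T ω with htdef
      have h0 := hL t⁻¹ (inv_pos.2 hω)
      have h1 : Tendsto (fun x => t ^ β * (L (t⁻¹ * x) / L x)) atTop (nhds (t ^ β)) := by
        have := h0.const_mul (t ^ β)
        simpa using this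
      refine Tendsto.congr' ?_ h1
      have hmul : Tendsto (fun x : ℝ => x / t) atTop atTop :=
        tendsto_id.atTop_div_const hω
      filter_upwards [eventually_ge_atTop x₁, hmul.eventually_ge_atTop x₁,
        eventually_gt_atTop 0] with x hxx₁ hxt hx0
      have e1 : U x = x ^ (-β) * L x := (hx₁ x hxx₁).1
      have hLx : 0 < L x := (hx₁ x hxx₁).2.1
      have e2 : U (x / t) = (x / t) ^ (-β) * L (x / t) := (hx₁ _ hxt).1
      have e3 : (x / t) ^ (-β:ℝ) = x ^ (-β) * t ^ β := by
        rw [div_eq_mul_inv, Real.mul_rpow hx0.le (inv_nonneg.2 hω.le),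
          Real.inv_rpow hω.le, Real.rpow_neg hω.le, inv_inv]
      have e4 : x / t = t⁻¹ * x := by rw [div_eq_mul_inv, mul_comm]
      have hxβne : x ^ (-β:ℝ) ≠ 0 := ne_of_gt (Real.rpow_pos_of_pos hx0 _)
      rw [e2, e1, e3, e4]
      rw [show x ^ (-β:ℝ) * t ^ β * L (t⁻¹ * x) = x ^ (-β:ℝ) * (t ^ β * L (t⁻¹ * x)) by ring]
      rw [mul_div_mul_left _ _ hxβne, mul_div_assoc]
  have hr : Tendsto (fun x => V x / U x) atTop (nhds c) := by
    refine hDCT.congr (fun x => ?_)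
    rw [hrep x, integral_div]
  -- assemble
  have hellq : ∀ᶠ x in atTop, x ^ β * V x = L x * (V x / U x) := by
    filter_upwards [eventually_ge_atTop x₁, eventually_gt_atTop 0] with x hx hx0
    have e1 : U x = x ^ (-β) * L x := (hx₁ x hx).1
    have hLne : L x ≠ 0 := ne_of_gt (hx₁ x hx).2.1
    have hmul : x ^ (β:ℝ) * x ^ (-β:ℝ) = 1 := by
      rw [← Real.rpow_add hx0]; simp
    have hxne : x ^ (-β:ℝ) ≠ 0 := ne_of_gt (Real.rpow_pos_of_pos hx0 _)
    rw [e1]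
    field_simp
    linear_combination (V x) * hmul
  refine ⟨fun x => x ^ β * V x, ?_, ?_, ?_⟩
  · intro a ha
    have hmul : Tendsto (fun x : ℝ => a * x) atTop atTop := tendsto_id.const_mul_atTop ha
    have hra : Tendsto (fun x => V (a*x) / U (a*x)) atTop (nhds c) := hr.comp hmul
    have hLa := hL a ha
    have hdiv : Tendsto (fun x => (V (a*x) / U (a*x)) / (V x / U x)) atTop (nhds 1) := by
      have := hra.div hr (ne_of_gt hcpos)
      rwa [div_self (ne_of_gt hcpos)] at this
    have hprod : Tendsto
        (fun x => (L (a*x) / L x) * ((V (a*x) / U (a*x)) / (V x / U x)))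
        atTop (nhds 1) := by
      have := hLa.mul hdiv
      rwa [one_mul] at this
    refine Tendsto.congr' ?_ hprod
    filter_upwards [hellq, hmul.eventually hellq] with x h1 h2
    show (L (a*x) / L x) * ((V (a*x) / U (a*x)) / (V x / U x))
        = (a*x) ^ β * V (a*x) / (x ^ β * V x)
    rw [h2, h1]
    exact (mul_div_mul_comm _ _ _ _).symm
  · filter_upwards [eventually_gt_atTop 0] with x hx0
    have hmul : x ^ (-β:ℝ) * x ^ (β:ℝ) = 1 := by
      rw [← Real.rpow_add hx0]; simp
    show V x = x ^ (-β) * (x ^ β * V x)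
    rw [← mul_assoc, hmul, one_mul]
  · have h1 : Tendsto (fun x => (V x / U x) / c) atTop (nhds 1) := by
      have := hr.div_const c
      rwa [div_self (ne_of_gt hcpos)] at this
    refine Tendsto.congr' ?_ h1
    filter_upwards [hellq, hLpos] with x he hLx
    show (V x / U x) / c = x ^ β * V x / (L x * c)
    rw [he, mul_div_mul_left _ _ (ne_of_gt hLx)]
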